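/- Let h = 2/(log 3 − log 2). Then for every n > 0, s(⌊n/2⌋+1, n) ≤ n^{h·log n}, where s(k,n) is the size of the threshold formula th(k,n) and log is the base-2 logarithm (any fixed base works). Consequently s(⌊n/2⌋+1,n) is n^{O(log n)}, i.e., quasipolynomial in n. -/

import Mathlib

/-- Size of the recursively defined threshold formula `th k n`. -/
def sz : ℕ → ℕ → ℕ
  | 0, _ => 1
  | k+1, n =>
    if h1 : n < k + 1 then 1
    else if h2 : n = 1 then 1
    else
      ∑ i ∈ Finset.range (k + 2),
        if i ≤ n / 2 ∧ k + 1 - i ≤ n - n / 2 then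
          sz i (n / 2) + sz (k + 1 - i) (n - n / 2)
        else 0
  termination_by k n => n
  decreasing_by all_goals omega

/-- A simple monotone majorant of `sz`. -/
def gsz : ℕ → ℕ
  | 0 => 1
  | 1 => 1
  | n+2 => (n+3) * (gsz ((n+2)/2) + gsz ((n+2) - (n+2)/2))
  termination_by n => n
  decreasing_by all_goals omega

/-- Number of halving steps. -/
def tsz : ℕ → ℕ
  | 0 => 0
  | 1 => 0
  | n+2 => tsz ((n+2) - (n+2)/2) + 1
  termination_by n => n
  decreasing_by all_goals omega

theorem gsz_pos (n : ℕ) : 0 < gsz n := by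
  induction n using Nat.strong_induction_on with
  | _ n ih =>
    match n with
    | 0 => simp [gsz]
    | 1 => simp [gsz]
    | n+2 =>
      rw [gsz]
      have h1 := ih ((n+2)/2) (by omega)
      have h2 := ih ((n+2) - (n+2)/2) (by omega)
      exact Nat.mul_pos (by omega) (by omega)

theorem gsz_mono (n : ℕ) : ∀ m ≤ n, gsz m ≤ gsz n := by
  induction n using Nat.strong_induction_on with
  | _ n ih =>
    intro m hm
    match n, m with
    | 0, 0 => exact le_rfl
    | 1, m => interval_cases m <;> simp [gsz]
    | n+2, 0 => rw [gsz.eq_1]; exact gsz_pos _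
    | n+2, 1 => rw [gsz.eq_2]; exact gsz_pos _
    | n+2, m+2 =>
      rw [gsz, gsz]
      apply Nat.mul_le_mul (by omega)
      have h1 : (m+2)/2 ≤ (n+2)/2 := by omega
      have h2 : (m+2) - (m+2)/2 ≤ (n+2) - (n+2)/2 := by omega
      exact Nat.add_le_add
        (ih ((n+2)/2) (by omega) _ h1)
        (ih ((n+2) - (n+2)/2) (by omega) _ h2)

theorem sz_le_gsz (n : ℕ) : ∀ k, sz k n ≤ gsz n := by
  induction n using Nat.strong_induction_on with
  | _ n ih =>
    intro k
    match k with
    | 0 => rw [sz]; exact gsz_pos n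
    | k+1 =>
      rw [sz]
      split
      · exact gsz_pos n
      · split
        · exact gsz_pos n
        · rename_i h1 h2
          -- here k+1 ≤ n and n ≠ 1, so n ≥ 2
          obtain ⟨m, rfl⟩ : ∃ m, n = m + 2 := ⟨n - 2, by omega⟩
          calc
            (∑ i ∈ Finset.range (k + 2),
                if i ≤ (m+2) / 2 ∧ k + 1 - i ≤ (m+2) - (m+2) / 2 then
                  sz i ((m+2) / 2) + sz (k + 1 - i) ((m+2) - (m+2) / 2)
                else 0)
              ≤ ∑ _i ∈ Finset.range (k + 2),
                  (gsz ((m+2)/2) + gsz ((m+2) - (m+2)/2)) := by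
                apply Finset.sum_le_sum
                intro i _
                split
                · exact Nat.add_le_add
                    (ih ((m+2)/2) (by omega) i)
                    (ih ((m+2) - (m+2)/2) (by omega) (k+1-i))
                · exact Nat.zero_le _
            _ = (k + 2) * (gsz ((m+2)/2) + gsz ((m+2) - (m+2)/2)) := by
                rw [Finset.sum_const, Finset.card_range, smul_eq_mul]
            _ ≤ (m + 3) * (gsz ((m+2)/2) + gsz ((m+2) - (m+2)/2)) :=
                Nat.mul_le_mul_right _ (by omega)
            _ = gsz (m+2) := (gsz.eq_3 m).symm

theorem tsz_bound (n : ℕ) (h : 1 ≤ n) : 3 ^ tsz n ≤ 2 ^ tsz n * n := by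
  induction n using Nat.strong_induction_on with
  | _ n ih =>
    match n with
    | 1 => simp [tsz]
    | m+2 =>
      rw [tsz]
      set q := (m+2) - (m+2)/2 with hq
      have hq1 : 1 ≤ q := by omega
      have hq2 : q < m + 2 := by omega
      have hq3 : 3 * q ≤ 2 * (m + 2) := by omega
      have hih := ih q hq2 hq1
      calc 3 ^ (tsz q + 1) = 3 * 3 ^ tsz q := by ring
        _ ≤ 3 * (2 ^ tsz q * q) := Nat.mul_le_mul_left _ hih
        _ = 2 ^ tsz q * (3 * q) := by ring
        _ ≤ 2 ^ tsz q * (2 * (m+2)) := Nat.mul_le_mul_left _ hq3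
        _ = 2 ^ (tsz q + 1) * (m + 2) := by ring

theorem gsz_le (n : ℕ) (h : 3 ≤ n) : gsz n ≤ n ^ (2 * tsz n) := by
  induction n using Nat.strong_induction_on with
  | _ n ih =>
    match n, h with
    | 3, _ => simp [gsz, tsz]
    | 4, _ => simp [gsz, tsz]
    | (m+5), _ =>
      set n := m + 5 with hn
      have hge : 3 ≤ n := by omega
      rw [show n = (m+3) + 2 from rfl, gsz, tsz, ← hn]
      set p := n / 2 with hp
      set q := n - n / 2 with hq'
      have hq3 : 3 ≤ q := by omega
      have hqn : q < n := by omega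
      have hpq : p ≤ q := by omega
      have h3q : 3 * q ≤ 2 * n := by omega
      set e := 2 * tsz q with he
      have hih : gsz q ≤ q ^ e := ih q hqn hq3
      have hmono : gsz p ≤ gsz q := gsz_mono q p hpq
      have key : 2 * (n+1) * q ^ e ≤ n ^ 2 * n ^ e := by
        have h3e : 0 < 3 ^ e := by positivity
        apply Nat.le_of_mul_le_mul_right _ h3e
        calc 2 * (n+1) * q ^ e * 3 ^ e = 2 * (n+1) * (3 * q) ^ e := by
              rw [mul_pow]; ring
          _ ≤ 2 * (n+1) * (2 * n) ^ e :=
              Nat.mul_le_mul_left _ (Nat.pow_le_pow_left h3q e)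
          _ = 2 * (n+1) * (2 ^ e * n ^ e) := by rw [mul_pow]
          _ ≤ n ^ 2 * (2 ^ e * n ^ e) := by
              apply Nat.mul_le_mul_right
              nlinarith
          _ ≤ n ^ 2 * (3 ^ e * n ^ e) := by
              apply Nat.mul_le_mul_left
              exact Nat.mul_le_mul_right _ (Nat.pow_le_pow_left (by norm_num) e)
          _ = n ^ 2 * n ^ e * 3 ^ e := by ring
      calc ((m+3) + 3) * (gsz p + gsz q) ≤ (n + 1) * (2 * gsz q) := by
            apply Nat.mul_le_mul (by omega)
            omega
        _ ≤ (n + 1) * (2 * q ^ e) := by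
            apply Nat.mul_le_mul_left
            exact Nat.mul_le_mul_left _ hih
        _ = 2 * (n + 1) * q ^ e := by ring
        _ ≤ n ^ 2 * n ^ e := key
        _ = n ^ (2 * (tsz q + 1)) := by rw [← pow_add, he]; ring_nf

theorem tsz_real (n : ℕ) (h : 1 ≤ n) :
    (tsz n : ℝ) * (Real.logb 2 3 - 1) ≤ Real.logb 2 n := by
  have hlog : Real.logb 2 3 - 1 = Real.logb 2 (3/2) := by
    rw [Real.logb_div (by norm_num) (by norm_num),
      Real.logb_self_eq_one (by norm_num)]
  rw [hlog]
  have h32 : ((3:ℝ)/2) ^ tsz n ≤ (n:ℝ) := by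
    have hb := tsz_bound n h
    have h2 : (0:ℝ) < 2 ^ tsz n := by positivity
    rw [div_pow, div_le_iff₀ h2]
    have := (Nat.cast_le (α := ℝ)).2 hb
    push_cast at this ⊢
    linarith
  calc (tsz n : ℝ) * Real.logb 2 (3/2)
      = Real.logb 2 (((3:ℝ)/2) ^ tsz n) := (Real.logb_pow 2 _ _).symm
    _ ≤ Real.logb 2 n := by
        apply Real.logb_le_logb_of_le (by norm_num) (by positivity) h32

theorem sz_middle_quasipoly (n : ℕ) (hn : 0 < n) :
    (sz (n / 2 + 1) n : ℝ) ≤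
      (n : ℝ) ^ ((2 / (Real.logb 2 3 - Real.logb 2 2)) * Real.logb 2 n) := by
  have hl2 : Real.logb 2 2 = 1 := Real.logb_self_eq_one (by norm_num)
  have hd0 : 0 < Real.logb 2 3 - 1 := by
    have : Real.logb 2 2 < Real.logb 2 3 :=
      Real.logb_lt_logb (by norm_num) (by norm_num) (by norm_num)
    linarith
  have hd1 : Real.logb 2 3 - 1 < 1 := by
    have h4 : Real.logb 2 (4:ℝ) = 2 := by
      rw [show (4:ℝ) = 2 ^ (2:ℕ) by norm_num, Real.logb_pow,
        Real.logb_self_eq_one (by norm_num)]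
      norm_num
    have : Real.logb 2 3 < Real.logb 2 4 :=
      Real.logb_lt_logb (by norm_num) (by norm_num) (by norm_num)
    rw [h4] at this
    linarith
  rw [hl2]
  set d := Real.logb 2 3 - 1 with hdd
  match n, hn with
  | 1, _ =>
    have h1 : sz 1 1 = 1 := by rw [sz]; norm_num
    rw [h1]
    push_cast
    rw [Real.one_rpow]
  | 2, _ =>
    have h11 : sz 1 1 = 1 := by rw [sz]; norm_num
    have h2 : sz 2 2 = 2 := by
      rw [sz]
      simp only [Finset.sum_range_succ, Finset.sum_range_zero]
      norm_num [h11]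
    rw [h2]
    have e1 : (1:ℝ) ≤ 2 / d * Real.logb 2 2 := by
      rw [hl2, mul_one, le_div_iff₀ hd0]
      linarith
    calc ((2:ℕ):ℝ) = (2:ℝ) ^ (1:ℝ) := by norm_num
      _ ≤ (2:ℝ) ^ (2 / d * Real.logb 2 2) := by
          apply Real.rpow_le_rpow_of_exponent_le (by norm_num) e1
      _ = ((2:ℕ):ℝ) ^ (2 / d * Real.logb 2 ((2:ℕ):ℝ)) := by norm_num
  | (m+3), _ =>
    set n := m + 3 with hn'
    have h3 : 3 ≤ n := by omega
    have hn1 : (1:ℝ) ≤ (n:ℝ) := by exact_mod_cast Nat.one_le_iff_ne_zero.2 (by omega)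
    have step1 : (sz (n / 2 + 1) n : ℝ) ≤ ((n ^ (2 * tsz n) : ℕ) : ℝ) := by
      exact_mod_cast Nat.cast_le.2 ((sz_le_gsz n (n/2+1)).trans (gsz_le n h3))
    have texp : ((2 * tsz n : ℕ) : ℝ) ≤ 2 / d * Real.logb 2 n := by
      have ht := tsz_real n (by omega)
      rw [div_mul_eq_mul_div, le_div_iff₀ hd0, Nat.cast_mul, Nat.cast_ofNat]
      rw [← hdd] at ht
      linarith
    calc (sz (n / 2 + 1) n : ℝ) ≤ ((n ^ (2 * tsz n) : ℕ) : ℝ) := step1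
      _ = (n:ℝ) ^ ((2 * tsz n : ℕ) : ℝ) := by
          rw [Nat.cast_pow, Real.rpow_natCast]
      _ ≤ (n:ℝ) ^ (2 / d * Real.logb 2 n) :=
          Real.rpow_le_rpow_of_exponent_le hn1 texp
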